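/- With the extended path space H = ℂ^{P̃(λ)}, the Young orthogonal form operators σ_1,…,σ_{n−1}, and the unit vectors |w̃_{S,λ}⟩ for S ∈ S̃(λ) as defined in the context, the operator Π := Σ_{S ∈ S̃(λ)} |w̃_{S,λ}⟩⟨w̃_{S,λ}| commutes with σ_i for every i ∈ {1,…,n−2}: σ_i Π = Π σ_i. -/
import Mathlib


open scoped BigOperators

noncomputable section

attribute [local instance] Classical.propDecidable

/-- A cell of a Young diagram, 0-based: `(i, j)` is row `i`, column `j`. -/
abbrev Cell : Type := ℕ × ℕ

/-- The content of a cell `(i,j)` is `j - i`. -/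
def cont (u : Cell) : ℤ := (u.2 : ℤ) - (u.1 : ℤ)

/-- A finite set of cells is a Young diagram if it is a lower set. -/
def IsYD (μ : Finset Cell) : Prop := IsLowerSet (μ : Set Cell)

/-- A cell `a ∉ μ` is addable if inserting it yields a Young diagram. -/
def Addable (μ : Finset Cell) (a : Cell) : Prop := a ∉ μ ∧ IsYD (insert a μ)

/-- A cell `c ∈ μ` is removable if deleting it yields a Young diagram. -/
def Removable (μ : Finset Cell) (c : Cell) : Prop := c ∈ μ ∧ IsYD (μ.erase c)

/-- The finset of addable cells of `μ` (they all lie in a `(|μ|+1) × (|μ|+1)` box). -/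
def AC (μ : Finset Cell) : Finset Cell :=
  ((Finset.range (μ.card + 1)) ×ˢ (Finset.range (μ.card + 1))).filter (fun a => Addable μ a)

/-- The finset of removable cells of `μ`. -/
def RC (μ : Finset Cell) : Finset Cell := μ.filter (fun c => Removable μ c)

/-- Length of the `i`-th row (0-based), i.e. the part `μ_{i+1}`. -/
def rowLen (μ : Finset Cell) (i : ℕ) : ℕ := (μ.filter (fun c => c.1 = i)).card

/-- The number of (nonempty) rows of `μ`. -/
def len (μ : Finset Cell) : ℕ := (μ.filter (fun c => c.2 = 0)).card

/-- Addable cells whose addition keeps at most `d` rows. -/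
def ACd (d : ℕ) (μ : Finset Cell) : Finset Cell :=
  (AC μ).filter (fun a => len (insert a μ) ≤ d)

/-- The number of standard Young tableaux of shape `μ`, as the number of saturated chains
`∅ = T 0 ⊂ T 1 ⊂ ⋯ ⊂ T |μ| = μ` of Young diagrams with `|T k| = k`. -/
def sytCount (μ : Finset Cell) : ℕ :=
  Nat.card {T : ℕ → Finset Cell //
    (∀ k, IsYD (T k)) ∧ (∀ k, (T k).card = min k μ.card) ∧
    (∀ k, T k ⊆ T (k + 1)) ∧ (∀ k, μ.card ≤ k → T k = μ)}

/-- Weyl dimension formula for a weakly decreasing integer vector `Λ` of length `d`. -/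
def weylDimVec (d : ℕ) (Λ : ℕ → ℤ) : ℚ :=
  ∏ p ∈ ((Finset.range d) ×ˢ (Finset.range d)).filter (fun p => p.1 < p.2),
    (((Λ p.1 : ℚ) - (Λ p.2 : ℚ) + (p.2 : ℚ) - (p.1 : ℚ)) / ((p.2 : ℚ) - (p.1 : ℚ)))

/-- Weyl dimension `m_μ` of the irrep of `U(d)` labelled by a partition `μ` with at most
`d` rows (padded with zeros). -/
def weylDim (d : ℕ) (μ : Finset Cell) : ℚ := weylDimVec d (fun i => (rowLen μ i : ℤ))

/-- All Young diagrams with `k` cells (they fit in a `k × k` box). -/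
def YDs (k : ℕ) : Finset (Finset Cell) :=
  ((Finset.range k ×ˢ Finset.range k).powerset).filter (fun μ => IsYD μ ∧ μ.card = k)

end

noncomputable section

/-- Extend a word `y : Fin n → Fin m` to `ℕ → ℕ` (junk value `0` outside the range). -/
def extWord {n m : ℕ} (y : Fin n → Fin m) : ℕ → ℕ :=
  fun k => if h : k < n then (y ⟨k, h⟩ : ℕ) else 0

/-- The Young diagram after `k` steps of the growth process described by the word `y`:
at step `k` a new cell is added at the end of row `y k`. -/
def diagAt (y : ℕ → ℕ) : ℕ → Finset Cell
  | 0 => ∅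
  | k + 1 => insert (y k, rowLen (diagAt y k) (y k)) (diagAt y k)

/-- The cell added at step `k` of the growth process described by `y`. -/
def newCell (y : ℕ → ℕ) (k : ℕ) : Cell := (y k, rowLen (diagAt y k) (y k))

/-- The content of the cell added at step `k` (i.e. of `T^{k+1} \ T^k`). -/
def contAt (y : ℕ → ℕ) (k : ℕ) : ℤ := cont (newCell y k)

/-- The axial distance `r_i(T) = cont(T^{i+1} \ T^i) − cont(T^i \ T^{i−1})`. -/
def axial (y : ℕ → ℕ) (i : ℕ) : ℤ := contAt y i - contAt y (i - 1)

end

noncomputable section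

attribute [local instance] Classical.propDecidable

/-- A path in the extended Bratteli diagram `B̃` from `∅` to the leaf `(λ,∅)`, encoded by
its Yamanouchi word `y : Fin n → Fin (d+1)` (the 0-based row in which a cell is added at
each step).  The conditions say: every step adds an addable cell (so every level is a
Young diagram with one more cell than the previous one), every level has at most one cell
in (0-based) row `d` (i.e. `T^k_{d+1} ≤ 1`), and the final diagram is `λ ∪ a` for some
addable cell `a ∈ AC(λ)`. -/
def ValidExtPath (d n : ℕ) (μ : Finset Cell) (y : Fin n → Fin (d + 1)) : Prop :=
  (∀ k < n, Addable (diagAt (extWord y) k) (newCell (extWord y) k)) ∧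
  (∀ k ≤ n, rowLen (diagAt (extWord y) k) d ≤ 1) ∧
  (∃ a ∈ AC μ, diagAt (extWord y) n = insert a μ)

/-- The (finite) set `P̃(λ)` of extended paths, as a type. -/
def PathExt (d n : ℕ) (μ : Finset Cell) : Type :=
  {y : Fin n → Fin (d + 1) // ValidExtPath d n μ y}

instance (d n : ℕ) (μ : Finset Cell) : Fintype (PathExt d n μ) := Subtype.fintype _
instance (d n : ℕ) (μ : Finset Cell) : DecidableEq (PathExt d n μ) :=
  Subtype.instDecidableEq

/-- A prefix `S ∈ S̃(λ)`: a path of length `n−1` in the extended Bratteli diagram ending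
at `λ`, encoded by its Yamanouchi word. -/
def ValidExtPrefix (d n : ℕ) (μ : Finset Cell) (z : Fin (n - 1) → Fin (d + 1)) : Prop :=
  (∀ k < n - 1, Addable (diagAt (extWord z) k) (newCell (extWord z) k)) ∧
  (∀ k ≤ n - 1, rowLen (diagAt (extWord z) k) d ≤ 1) ∧
  diagAt (extWord z) (n - 1) = μ

/-- The (finite) set `S̃(λ)` of prefixes, as a type. -/
def PrefixExt (d n : ℕ) (μ : Finset Cell) : Type :=
  {z : Fin (n - 1) → Fin (d + 1) // ValidExtPrefix d n μ z}

instance (d n : ℕ) (μ : Finset Cell) : Fintype (PrefixExt d n μ) := Subtype.fintype _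

/-- The unit vector `|w̃_{S,λ}⟩ = Σ_{a ∈ AC(λ)} √(f^{λ∪a}/(n·f^λ)) |S ∘ (λ∪a)⟩`,
written in coordinates: its `T`-th coordinate is `√(f^{T^n}/(n·f^λ))` if the path `T`
extends the prefix `S`, and `0` otherwise. -/
def wVecExt (d n : ℕ) (μ : Finset Cell) (S : PrefixExt d n μ) : PathExt d n μ → ℂ :=
  fun T =>
    if ∀ k < n - 1, extWord T.val k = extWord S.val k then
      ((Real.sqrt ((sytCount (diagAt (extWord T.val) n) : ℝ) /
        ((n : ℝ) * (sytCount μ : ℝ)))) : ℂ)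
    else 0

/-- The operator `Σ_{S ∈ S̃(λ)} |w̃_{S,λ}⟩⟨w̃_{S,λ}|`. -/
def WmatExt (d n : ℕ) (μ : Finset Cell) : Matrix (PathExt d n μ) (PathExt d n μ) ℂ :=
  ∑ S : PrefixExt d n μ,
    Matrix.vecMulVec (wVecExt d n μ S) (fun T => star (wVecExt d n μ S T))

/-- The Young orthogonal form of the transposition `σ_i` on `ℂ^{P̃(λ)}`:
`σ_i |T⟩ = (1/r_i(T)) |T⟩ + √(1 − 1/r_i(T)²) |σ_i T⟩`, where `σ_i T` is the path `T` with
its `i`-th vertex replaced by the other intermediate diagram between `T^{i−1}` and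
`T^{i+1}` (whenever that diagram is valid). -/
def sigmaMatExt (d n : ℕ) (μ : Finset Cell) (i : ℕ) :
    Matrix (PathExt d n μ) (PathExt d n μ) ℂ :=
  Matrix.of fun T' T =>
    (if T' = T then ((1 : ℂ) / ((axial (extWord T.val) i : ℤ) : ℂ)) else 0) +
    (if (∀ k, k ≠ i → diagAt (extWord T'.val) k = diagAt (extWord T.val) k) ∧
        diagAt (extWord T'.val) i ≠ diagAt (extWord T.val) i
      then ((Real.sqrt (1 - ((1 : ℝ) / ((axial (extWord T.val) i : ℤ) : ℝ)) ^ 2)) : ℂ)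
      else 0)

/-- The operator `π := σ_1 σ_2 ⋯ σ_{n−1}` on `ℂ^{P̃(λ)}`. -/
def piMatExt (d n : ℕ) (μ : Finset Cell) : Matrix (PathExt d n μ) (PathExt d n μ) ℂ :=
  ((List.range (n - 1)).map (fun j => sigmaMatExt d n μ (j + 1))).prod

end

noncomputable section Aux

attribute [local instance] Classical.propDecidable

namespace Stmt13Aux

lemma diagAt_congr {y z : ℕ → ℕ} : ∀ {k : ℕ}, (∀ j < k, y j = z j) →
    diagAt y k = diagAt z k
  | 0, _ => rfl
  | k + 1, h => by
    have ih : diagAt y k = diagAt z k := diagAt_congr (fun j hj => h j (by omega))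
    simp only [diagAt, ih, h k (by omega)]

lemma newCell_congr {y z : ℕ → ℕ} {k : ℕ} (h : ∀ j ≤ k, y j = z j) :
    newCell y k = newCell z k := by
  unfold newCell
  rw [diagAt_congr (fun j hj => h j (by omega)), h k le_rfl]

lemma axial_congr {y z : ℕ → ℕ} {i : ℕ} (h : ∀ j ≤ i, y j = z j) :
    axial y i = axial z i := by
  unfold axial contAt
  rw [newCell_congr h, newCell_congr (fun j hj => h j (by omega))]

lemma diagAt_succ (y : ℕ → ℕ) (k : ℕ) :
    diagAt y (k + 1) = insert (newCell y k) (diagAt y k) := rfl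

lemma letter_recover {y z : ℕ → ℕ} {k : ℕ}
    (hy : Addable (diagAt y k) (newCell y k)) (hz : Addable (diagAt z k) (newCell z k))
    (h0 : diagAt y k = diagAt z k) (h1 : diagAt y (k + 1) = diagAt z (k + 1)) :
    y k = z k := by
  rw [diagAt_succ, diagAt_succ, h0] at h1
  have hcell : newCell y k = newCell z k := by
    have hmem : newCell y k ∈ insert (newCell z k) (diagAt z k) := by
      rw [← h1]; exact Finset.mem_insert_self _ _
    rcases Finset.mem_insert.1 hmem with h | h
    · exact h
    · exact absurd h (h0 ▸ hy.1)
  have := congrArg Prod.fst hcell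
  simpa [newCell] using this

end Stmt13Aux
end Aux
noncomputable section Aux2

attribute [local instance] Classical.propDecidable

namespace Stmt13Aux

variable {d n : ℕ} {μ : Finset Cell}

lemma extWord_lt {m : ℕ} (y : Fin m → Fin (d + 1)) {k : ℕ} (h : k < m) :
    extWord y k = (y ⟨k, h⟩ : ℕ) := by simp [extWord, h]

lemma extWord_ge {m : ℕ} (y : Fin m → Fin (d + 1)) {k : ℕ} (h : m ≤ k) :
    extWord y k = 0 := by simp [extWord, Nat.not_lt.2 h]

/-- Paths with the same Yamanouchi word are equal. -/
lemma path_eq {T T' : PathExt d n μ}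
    (h : ∀ k < n, extWord T.val k = extWord T'.val k) : T = T' := by
  apply Subtype.ext; funext k
  have hk := h k.1 k.2
  rw [extWord_lt T.val k.2, extWord_lt T'.val k.2] at hk
  exact Fin.ext (by simpa using hk)

lemma path_addable (T : PathExt d n μ) {k : ℕ} (hk : k < n) :
    Addable (diagAt (extWord T.val) k) (newCell (extWord T.val) k) := T.2.1 k hk

/-- Recover a letter of a valid path from its diagrams. -/
lemma word_of_diag (T T' : PathExt d n μ) {k : ℕ} (hk : k < n)
    (h0 : diagAt (extWord T.val) k = diagAt (extWord T'.val) k)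
    (h1 : diagAt (extWord T.val) (k + 1) = diagAt (extWord T'.val) (k + 1)) :
    extWord T.val k = extWord T'.val k :=
  letter_recover (path_addable T hk) (path_addable T' hk) h0 h1

/-- If the diagrams agree at level `m ≥ n` then they agree at all levels `≥ m`. -/
lemma diagAt_ge_congr (T T' : PathExt d n μ) {m : ℕ} (hm : n ≤ m)
    (h : diagAt (extWord T.val) m = diagAt (extWord T'.val) m) :
    ∀ k, m ≤ k → diagAt (extWord T.val) k = diagAt (extWord T'.val) k := by
  intro k hk
  induction k with
  | zero => rfl
  | succ k ih =>
    rcases Nat.lt_or_ge m (k + 1) with hlt | hge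
    · have hmk : m ≤ k := by omega
      have ihk := ih hmk
      rw [diagAt_succ, diagAt_succ, ihk]
      congr 1
      unfold newCell
      rw [ihk, extWord_ge T.val (by omega), extWord_ge T'.val (by omega)]
    · have : m = k + 1 := by omega
      rwa [← this]

end Stmt13Aux
end Aux2
noncomputable section Aux3

attribute [local instance] Classical.propDecidable

namespace Stmt13Aux

variable {d n : ℕ} {μ : Finset Cell}

/-- Splicing the first `n-1` letters of `T` with the last letter of `V` gives a valid
path, provided the diagrams of `T` and `V` at level `n-1` agree. -/
lemma splice_exists (hn : 3 ≤ n) (T V : PathExt d n μ)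
    (h : diagAt (extWord T.val) (n - 1) = diagAt (extWord V.val) (n - 1)) :
    ∃ Z : PathExt d n μ,
      (∀ k < n - 1, extWord Z.val k = extWord T.val k) ∧
      (∀ k ≤ n - 1, diagAt (extWord Z.val) k = diagAt (extWord T.val) k) ∧
      (∀ k, n ≤ k → diagAt (extWord Z.val) k = diagAt (extWord V.val) k) := by
  set y := extWord T.val with hy
  set v := extWord V.val with hv
  set w : Fin n → Fin (d + 1) :=
    fun k => if (k : ℕ) < n - 1 then T.val k else V.val k with hw
  have hew_lt : ∀ k < n - 1, extWord w k = y k := by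
    intro k hk
    rw [extWord_lt w (by omega), hy, extWord_lt T.val (by omega), hw]
    simp [hk]
  have hew_top : extWord w (n - 1) = v (n - 1) := by
    rw [extWord_lt w (by omega), hv, extWord_lt V.val (by omega), hw]
    simp
  have hdiag_le : ∀ k ≤ n - 1, diagAt (extWord w) k = diagAt y k := by
    intro k hk
    exact diagAt_congr (fun j hj => hew_lt j (by omega))
  have hnew_lt : ∀ k < n - 1, newCell (extWord w) k = newCell y k := by
    intro k hk
    exact newCell_congr (fun j hj => hew_lt j (by omega))
  have hnew_top : newCell (extWord w) (n - 1) = newCell v (n - 1) := by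
    unfold newCell
    rw [hdiag_le (n - 1) le_rfl, h, hew_top]
  have hdiag_n : diagAt (extWord w) n = diagAt v n := by
    have h1 : n - 1 + 1 = n := by omega
    have h2 : diagAt (extWord w) (n - 1 + 1) = diagAt v (n - 1 + 1) := by
      rw [diagAt_succ, diagAt_succ, hnew_top, hdiag_le (n - 1) le_rfl, h]
    simpa [h1] using h2
  have valid : ValidExtPath d n μ w := by
    refine ⟨?_, ?_, ?_⟩
    · intro k hk
      rcases Nat.lt_or_ge k (n - 1) with h' | h'
      · rw [hdiag_le k (le_of_lt h'), hnew_lt k h']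
        exact T.2.1 k hk
      · have hk1 : k = n - 1 := by omega
        subst hk1
        rw [hdiag_le _ le_rfl, h, hnew_top]
        exact V.2.1 (n - 1) (by omega)
    · intro k hk
      rcases le_or_gt k (n - 1) with h' | h'
      · rw [hdiag_le k h']
        exact T.2.2.1 k (by omega)
      · have hk1 : k = n := by omega
        subst hk1
        rw [hdiag_n]
        exact V.2.2.1 _ le_rfl
    · rw [hdiag_n]
      exact V.2.2.2
  refine ⟨⟨w, valid⟩, hew_lt, hdiag_le, ?_⟩
  intro k hk
  exact diagAt_ge_congr ⟨w, valid⟩ V le_rfl hdiag_n k hk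

end Stmt13Aux
end Aux3
noncomputable section Aux4

attribute [local instance] Classical.propDecidable

namespace Stmt13Aux

variable {d n : ℕ} {μ : Finset Cell}

/-- Agreement of the first `n-1` letters. -/
def Agr (d n : ℕ) (μ : Finset Cell) (T' T : PathExt d n μ) : Prop :=
  ∀ k < n - 1, extWord T'.val k = extWord T.val k

/-- The coefficient `√(f^{T^n}/(n f^μ))` of a path. -/
def ccoef (d n : ℕ) (μ : Finset Cell) (T : PathExt d n μ) : ℂ :=
  ((Real.sqrt ((sytCount (diagAt (extWord T.val) n) : ℝ) /
    ((n : ℝ) * (sytCount μ : ℝ)))) : ℂ)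

lemma prefix_eq {S S' : PrefixExt d n μ}
    (h : ∀ k < n - 1, extWord S.val k = extWord S'.val k) : S = S' := by
  apply Subtype.ext; funext k
  have hk := h k.1 k.2
  rw [extWord_lt S.val k.2, extWord_lt S'.val k.2] at hk
  exact Fin.ext (by simpa using hk)

lemma trunc_exists (hn : 3 ≤ n) (T : PathExt d n μ)
    (hP : diagAt (extWord T.val) (n - 1) = μ) :
    ∃ S : PrefixExt d n μ, ∀ k < n - 1, extWord S.val k = extWord T.val k := by
  set z : Fin (n - 1) → Fin (d + 1) :=
    fun k => T.val ⟨k.1, by have := k.2; omega⟩ with hzdef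
  have hz : ∀ k < n - 1, extWord z k = extWord T.val k := by
    intro k hk
    rw [extWord_lt z hk, extWord_lt T.val (by omega), hzdef]
  have valid : ValidExtPrefix d n μ z := by
    refine ⟨?_, ?_, ?_⟩
    · intro k hk
      rw [diagAt_congr (fun j hj => hz j (by omega)),
        newCell_congr (fun j hj => hz j (by omega))]
      exact T.2.1 k (by omega)
    · intro k hk
      rw [diagAt_congr (fun j hj => hz j (by omega))]
      exact T.2.2.1 k (by omega)
    · rw [diagAt_congr (fun j hj => hz j hj)]
      exact hP
  exact ⟨⟨z, valid⟩, hz⟩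

lemma W_apply (hn : 3 ≤ n) (T' T : PathExt d n μ) :
    WmatExt d n μ T' T =
      if Agr d n μ T' T ∧ diagAt (extWord T.val) (n - 1) = μ then
        ccoef d n μ T' * ccoef d n μ T
      else 0 := by
  unfold WmatExt
  rw [Matrix.sum_apply]
  simp only [Matrix.vecMulVec_apply]
  by_cases hc : Agr d n μ T' T ∧ diagAt (extWord T.val) (n - 1) = μ
  · obtain ⟨hA, hP⟩ := hc
    obtain ⟨S₀, hS₀⟩ := trunc_exists hn T hP
    rw [if_pos ⟨hA, hP⟩]
    rw [Finset.sum_eq_single S₀]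
    · unfold wVecExt
      have h1 : ∀ k < n - 1, extWord T.val k = extWord S₀.val k :=
        fun k hk => (hS₀ k hk).symm
      have h2 : ∀ k < n - 1, extWord T'.val k = extWord S₀.val k :=
        fun k hk => (hA k hk).trans (hS₀ k hk).symm
      rw [if_pos h1, if_pos h2]
      simp [ccoef, Complex.star_def, Complex.conj_ofReal]
    · intro S _ hSne
      unfold wVecExt
      by_cases hT : ∀ k < n - 1, extWord T.val k = extWord S.val k
      · exact absurd (prefix_eq (fun k hk => (hT k hk).symm.trans (hS₀ k hk).symm)) hSne
      · rw [if_neg hT, star_zero, mul_zero]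
    · intro h
      exact absurd (Finset.mem_univ S₀) h
  · rw [if_neg hc]
    apply Finset.sum_eq_zero
    intro S _
    unfold wVecExt
    by_cases hT' : ∀ k < n - 1, extWord T'.val k = extWord S.val k
    · by_cases hT : ∀ k < n - 1, extWord T.val k = extWord S.val k
      · exfalso
        apply hc
        constructor
        · intro k hk
          exact (hT' k hk).trans (hT k hk).symm
        · have : diagAt (extWord T.val) (n - 1) = diagAt (extWord S.val) (n - 1) :=
            diagAt_congr (fun j hj => hT j hj)
          rw [this]
          exact S.2.2.2
      · rw [if_neg hT, star_zero, mul_zero]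
    · rw [if_neg hT', zero_mul]

end Stmt13Aux
end Aux4
noncomputable section Aux5

attribute [local instance] Classical.propDecidable

namespace Stmt13Aux

variable {d n : ℕ} {μ : Finset Cell}

/-- The swap relation appearing in `sigmaMatExt`. -/
def Rel (d n : ℕ) (μ : Finset Cell) (i : ℕ) (A B : PathExt d n μ) : Prop :=
  (∀ k, k ≠ i → diagAt (extWord A.val) k = diagAt (extWord B.val) k) ∧
    diagAt (extWord A.val) i ≠ diagAt (extWord B.val) i

def axC (d n : ℕ) (μ : Finset Cell) (i : ℕ) (B : PathExt d n μ) : ℂ :=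
  ((axial (extWord B.val) i : ℤ) : ℂ)

def bC (d n : ℕ) (μ : Finset Cell) (i : ℕ) (B : PathExt d n μ) : ℂ :=
  ((Real.sqrt (1 - ((1 : ℝ) / ((axial (extWord B.val) i : ℤ) : ℝ)) ^ 2)) : ℂ)

lemma sigma_apply (i : ℕ) (A B : PathExt d n μ) :
    sigmaMatExt d n μ i A B =
      (if A = B then 1 / axC d n μ i B else 0) +
      (if Rel d n μ i A B then bC d n μ i B else 0) := by
  simp [sigmaMatExt, axC, bC, Rel, Matrix.of_apply]

/-- `Agr` implies equality of diagrams up to level `n-1`. -/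
lemma Agr.diag {T' T : PathExt d n μ} (h : Agr d n μ T' T) :
    ∀ k ≤ n - 1, diagAt (extWord T'.val) k = diagAt (extWord T.val) k :=
  fun k hk => diagAt_congr (fun j hj => h j (by omega))

lemma Agr.axial_eq {T' T : PathExt d n μ} {i : ℕ} (hn : 3 ≤ n) (hi : i ≤ n - 2)
    (h : Agr d n μ T' T) : axial (extWord T'.val) i = axial (extWord T.val) i :=
  axial_congr (fun j hj => h j (by omega))

lemma main_comm (hn : 3 ≤ n) {i : ℕ} (hi : i ≤ n - 2) :
    sigmaMatExt d n μ i * WmatExt d n μ = WmatExt d n μ * sigmaMatExt d n μ i := by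
  have hin1 : i ≤ n - 1 := by omega
  have hin1' : n - 1 ≠ i := by omega
  have hinn : n ≠ i := by omega
  ext T' T
  rw [Matrix.mul_apply, Matrix.mul_apply]
  simp only [sigma_apply]
  -- split the sums
  have hL : ∑ U, ((if T' = U then 1 / axC d n μ i U else 0) +
        (if Rel d n μ i T' U then bC d n μ i U else 0)) * WmatExt d n μ U T =
      (1 / axC d n μ i T') * WmatExt d n μ T' T +
      ∑ U, (if Rel d n μ i T' U then bC d n μ i U * WmatExt d n μ U T else 0) := by
    simp only [add_mul, ite_mul, zero_mul]
    rw [Finset.sum_add_distrib, Finset.sum_ite_eq]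
    simp
  have hR : ∑ U, WmatExt d n μ T' U * ((if U = T then 1 / axC d n μ i T else 0) +
        (if Rel d n μ i U T then bC d n μ i T else 0)) =
      WmatExt d n μ T' T * (1 / axC d n μ i T) +
      ∑ U, (if Rel d n μ i U T then WmatExt d n μ T' U * bC d n μ i T else 0) := by
    simp only [mul_add, mul_ite, mul_zero]
    rw [Finset.sum_add_distrib, Finset.sum_ite_eq']
    simp
  rw [hL, hR]
  by_cases hc : Agr d n μ T' T ∧ diagAt (extWord T.val) (n - 1) = μ
  · -- diagonal case: the two side sums vanish and the diagonal terms agree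
    have hax : axC d n μ i T' = axC d n μ i T := by
      unfold axC; rw [Agr.axial_eq hn hi hc.1]
    have hS1 : ∑ U, (if Rel d n μ i T' U then bC d n μ i U * WmatExt d n μ U T else 0)
        = 0 := by
      apply Finset.sum_eq_zero
      intro U _
      by_cases hRel : Rel d n μ i T' U
      · rw [if_pos hRel, W_apply hn]
        rw [if_neg, mul_zero]
        rintro ⟨hAgr, -⟩
        apply hRel.2
        have h1 : Agr d n μ T' U := fun k hk => (hc.1 k hk).trans (hAgr k hk).symm
        exact Agr.diag h1 i hin1
      · rw [if_neg hRel]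
    have hS2 : ∑ U, (if Rel d n μ i U T then WmatExt d n μ T' U * bC d n μ i T else 0)
        = 0 := by
      apply Finset.sum_eq_zero
      intro U _
      by_cases hRel : Rel d n μ i U T
      · rw [if_pos hRel, W_apply hn]
        rw [if_neg, zero_mul]
        rintro ⟨hAgr, -⟩
        apply hRel.2
        have h1 : Agr d n μ U T := fun k hk => (hAgr k hk).symm.trans (hc.1 k hk)
        exact Agr.diag h1 i hin1
      · rw [if_neg hRel]
    rw [hS1, hS2, hax, add_zero, add_zero, mul_comm]
  · -- off-diagonal case
    have hW0 : WmatExt d n μ T' T = 0 := by rw [W_apply hn, if_neg hc]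
    rw [hW0, mul_zero, zero_mul, zero_add, zero_add]
    by_cases hex : ∃ U, Rel d n μ i T' U ∧ Agr d n μ U T ∧
        diagAt (extWord T.val) (n - 1) = μ
    · obtain ⟨T₁, hRel1, hAgr1, hP⟩ := hex
      -- diagrams of T' and T agree at level n-1
      have hdTT' : diagAt (extWord T'.val) (n - 1) = diagAt (extWord T.val) (n - 1) :=
        (hRel1.1 (n - 1) hin1').trans (Agr.diag hAgr1 (n - 1) le_rfl)
      obtain ⟨T₂, hw2, hdle2, hdge2⟩ := splice_exists hn T' T hdTT'
      have hAgr2 : Agr d n μ T' T₂ := fun k hk => (hw2 k hk).symm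
      have hRel2 : Rel d n μ i T₂ T := by
        constructor
        · intro k hk
          rcases le_or_gt k (n - 1) with h' | h'
          · rw [hdle2 k h', hRel1.1 k hk, Agr.diag hAgr1 k h']
          · exact hdge2 k (by omega)
        · rw [hdle2 i hin1, ← Agr.diag hAgr1 i hin1]
          exact hRel1.2
      have hP2 : diagAt (extWord T₂.val) (n - 1) = μ := by
        rw [hdle2 (n - 1) le_rfl, hdTT', hP]
      -- uniqueness of T₁ in the left sum
      have huniq1 : ∀ U : PathExt d n μ, Rel d n μ i T' U → Agr d n μ U T → U = T₁ := by
        intro U hRelU hAgrU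
        apply path_eq
        intro k hk
        rcases lt_or_ge k (n - 1) with h' | h'
        · exact (hAgrU k h').trans (hAgr1 k h').symm
        · have hk1 : k = n - 1 := by omega
          apply word_of_diag U T₁ hk
          · rw [hk1, Agr.diag hAgrU (n - 1) le_rfl, Agr.diag hAgr1 (n - 1) le_rfl]
          · have h1 : k + 1 = n := by omega
            rw [h1, ← hRelU.1 n hinn]
            exact hRel1.1 n hinn
      -- uniqueness of T₂ in the right sum
      have huniq2 : ∀ U : PathExt d n μ, Rel d n μ i U T → Agr d n μ T' U → U = T₂ := by
        intro U hRelU hAgrU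
        apply path_eq
        intro k hk
        rcases lt_or_ge k (n - 1) with h' | h'
        · exact (hAgrU k h').symm.trans (hw2 k h').symm
        · have hk1 : k = n - 1 := by omega
          apply word_of_diag U T₂ hk
          · rw [hk1, ← Agr.diag hAgrU (n - 1) le_rfl, hdle2 (n - 1) le_rfl]
          · have h1 : k + 1 = n := by omega
            rw [h1, hRelU.1 n hinn, hdge2 n le_rfl]
      have hax1 : axial (extWord T₁.val) i = axial (extWord T.val) i :=
        Agr.axial_eq hn hi hAgr1
      have hc1 : ccoef d n μ T₁ = ccoef d n μ T' := by
        unfold ccoef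
        rw [← hRel1.1 n hinn]
      have hc2 : ccoef d n μ T₂ = ccoef d n μ T := by
        unfold ccoef
        rw [hdge2 n le_rfl]
      have hb1 : bC d n μ i T₁ = bC d n μ i T := by
        unfold bC
        rw [hax1]
      have hS1 : ∑ U, (if Rel d n μ i T' U then bC d n μ i U * WmatExt d n μ U T else 0)
          = bC d n μ i T * (ccoef d n μ T' * ccoef d n μ T) := by
        rw [Finset.sum_eq_single T₁]
        · rw [if_pos hRel1, W_apply hn, if_pos ⟨hAgr1, hP⟩, hb1, hc1]
        · intro U _ hUne
          by_cases hRelU : Rel d n μ i T' U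
          · rw [if_pos hRelU, W_apply hn, if_neg, mul_zero]
            rintro ⟨hAgrU, -⟩
            exact hUne (huniq1 U hRelU hAgrU)
          · rw [if_neg hRelU]
        · intro h
          exact absurd (Finset.mem_univ T₁) h
      have hS2 : ∑ U, (if Rel d n μ i U T then WmatExt d n μ T' U * bC d n μ i T else 0)
          = (ccoef d n μ T' * ccoef d n μ T) * bC d n μ i T := by
        rw [Finset.sum_eq_single T₂]
        · rw [if_pos hRel2, W_apply hn, if_pos ⟨hAgr2, hP2⟩, hc2]
        · intro U _ hUne
          by_cases hRelU : Rel d n μ i U T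
          · rw [if_pos hRelU, W_apply hn, if_neg, zero_mul]
            rintro ⟨hAgrU, -⟩
            exact hUne (huniq2 U hRelU hAgrU)
          · rw [if_neg hRelU]
        · intro h
          exact absurd (Finset.mem_univ T₂) h
      rw [hS1, hS2]
      ring
    · -- both sums vanish
      have hS1 : ∑ U, (if Rel d n μ i T' U then bC d n μ i U * WmatExt d n μ U T else 0)
          = 0 := by
        apply Finset.sum_eq_zero
        intro U _
        by_cases hRel : Rel d n μ i T' U
        · rw [if_pos hRel, W_apply hn, if_neg, mul_zero]
          rintro ⟨hAgr, hP⟩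
          exact hex ⟨U, hRel, hAgr, hP⟩
        · rw [if_neg hRel]
      have hS2 : ∑ U, (if Rel d n μ i U T then WmatExt d n μ T' U * bC d n μ i T else 0)
          = 0 := by
        apply Finset.sum_eq_zero
        intro U _
        by_cases hRel : Rel d n μ i U T
        · rw [if_pos hRel, W_apply hn, if_neg, zero_mul]
          rintro ⟨hAgr, hPU⟩
          -- construct a witness for hex from U
          have hdTT' : diagAt (extWord T.val) (n - 1) = diagAt (extWord T'.val) (n - 1) := by
            rw [← hRel.1 (n - 1) hin1', ← Agr.diag hAgr (n - 1) le_rfl]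
          obtain ⟨Z, hwZ, hdleZ, hdgeZ⟩ := splice_exists hn T T' hdTT'
          apply hex
          refine ⟨Z, ⟨?_, ?_⟩, hwZ, ?_⟩
          · intro k hk
            rcases le_or_gt k (n - 1) with h' | h'
            · rw [hdleZ k h', ← hRel.1 k hk, ← Agr.diag hAgr k h']
            · exact (hdgeZ k (by omega)).symm
          · rw [hdleZ i hin1, Agr.diag hAgr i hin1]
            exact hRel.2
          · rw [← hRel.1 (n - 1) hin1']
            exact hPU
        · rw [if_neg hRel]
      rw [hS1, hS2]

end Stmt13Aux
end Aux5

/-- the operator `Π := Σ_{S ∈ S̃(λ)} |w̃_{S,λ}⟩⟨w̃_{S,λ}|` commutes with the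
Young orthogonal form operators `σ_i` for every `i ∈ {1,…,n−2}`. -/
theorem stmt13 (d n : ℕ) (hd : 1 ≤ d) (hn : 3 ≤ n) (μ : Finset Cell) (hYD : IsYD μ)
    (hcard : μ.card = n - 1) (hlen : len μ ≤ d) :
    ∀ i, 1 ≤ i → i ≤ n - 2 →
      sigmaMatExt d n μ i * WmatExt d n μ = WmatExt d n μ * sigmaMatExt d n μ i := by
  intro i _ hi2
  exact Stmt13Aux.main_comm hn hi2
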